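/- Let G be a nontrivial finite C-group and let q be the largest prime dividing |G|. Then the Sylow q-subgroup Q of G is normal in G, and Q has a complement H in G, i.e., there is a subgroup H ≤ G with H ∩ Q = 1 and H·Q = G; in particular G is an internal semidirect product H ⋉ Q, and H is again a C-group. -/

import Mathlib

universe u

theorem my_norm_le_cent {G : Type*} [Group G] [Finite G] {p : ℕ} [hp : Fact p.Prime]
    (P : Sylow p G) (hcyc : IsCyclic ↥(P : Subgroup G))
    (hmin : ∀ r : ℕ, r.Prime → r ∣ Nat.card G → p ≤ r) :
    Subgroup.normalizer ((P : Subgroup G) : Set G) ≤ Subgroup.centralizer (P : Set G) := by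
  haveI hcomm : IsMulCommutative ↥(P : Subgroup G) :=
    ⟨⟨fun a b => (IsCyclic.commGroup (α := ↥(P : Subgroup G))).mul_comm a b⟩⟩
  set f := (P : Subgroup G).normalizerMonoidHom with hf
  have hker : f.ker = (Subgroup.centralizer (P : Set G)).subgroupOf (Subgroup.normalizer ((P : Subgroup G) : Set G)) :=
    Subgroup.normalizerMonoidHom_ker (P : Subgroup G)
  have hle : ((P : Subgroup G).subgroupOf (Subgroup.normalizer ((P : Subgroup G) : Set G))) ≤ f.ker := by
    rw [hker]
    intro x hx
    rw [Subgroup.mem_subgroupOf] at hx ⊢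
    exact Subgroup.le_centralizer _ hx
  have hdvd1 : Nat.card f.range ∣ (P : Subgroup G).index := by
    rw [← Subgroup.index_ker]
    exact dvd_trans (Subgroup.index_dvd_of_le hle)
      (Subgroup.relIndex_dvd_index_of_le Subgroup.le_normalizer)
  have hdvd2 : Nat.card f.range ∣ Nat.totient (Nat.card ↥(P : Subgroup G)) := by
    rw [← hcyc.card_mulAut]
    exact Subgroup.card_subgroup_dvd_card f.range
  have hone : Nat.card f.range = 1 := by
    by_contra hne
    set m := Nat.card f.range with hm
    have hm0 : m ≠ 0 := by
      intro h0
      rw [h0] at hdvd1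
      exact (P : Subgroup G).index_ne_zero_of_finite (zero_dvd_iff.mp hdvd1)
    obtain ⟨r, hr, hrm⟩ := (m.exists_prime_and_dvd hne)
    have hrI : r ∣ (P : Subgroup G).index := hrm.trans hdvd1
    have hrp : r ≠ p := by
      intro h
      exact P.not_dvd_index (h ▸ hrI)
    have hrG : r ∣ Nat.card G := hrI.trans ((↑P : Subgroup G).index_dvd_card)
    have hpr : p ≤ r := hmin r hr hrG
    obtain ⟨k, hk⟩ := IsPGroup.iff_card.mp P.2
    have hrt : r ∣ Nat.totient (p ^ k) := by
      rw [← hk]; exact hrm.trans hdvd2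
    cases k with
    | zero =>
      rw [pow_zero, Nat.totient_one, Nat.dvd_one] at hrt
      exact hr.ne_one hrt
    | succ k =>
      rw [Nat.totient_prime_pow hp.out (Nat.succ_pos k)] at hrt
      have : r ∣ p - 1 := by
        rcases (Nat.Prime.dvd_mul hr).mp hrt with h | h
        · exact absurd (hr.dvd_of_dvd_pow h) (by simpa [Nat.prime_dvd_prime_iff_eq hr hp.out] using hrp)
        · exact h
      have hp2 := hp.out.two_le
      have h1 : r ≤ p - 1 := Nat.le_of_dvd (by omega) this
      omega
  have hkertop : f.ker = ⊤ := by
    rw [← Subgroup.index_eq_one, Subgroup.index_ker, hone]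
  rw [hker] at hkertop
  exact Subgroup.subgroupOf_eq_top.mp hkertop

theorem my_map_subtype_normal {G : Type*} [Group G] (N : Subgroup G) [N.Normal]
    (R : Subgroup ↥N) [R.Characteristic] : (R.map N.subtype).Normal := by
  constructor
  intro n hn g
  obtain ⟨r, hr, rfl⟩ := hn
  refine ⟨MulAut.conjNormal g r, ?_, ?_⟩
  · exact (Subgroup.characteristic_iff_map_le.mp inferInstance (MulAut.conjNormal g)) ⟨r, hr, rfl⟩
  · simp [MulAut.conjNormal_apply]

theorem my_sylow_normal (n : ℕ) : ∀ (G : Type u) [Group G] [Finite G], Nat.card G = n →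
    (∀ p : ℕ, p.Prime → ∀ P : Sylow p G, IsCyclic ↥P) →
    ∀ q : ℕ, q.Prime → q ∣ Nat.card G → (∀ r : ℕ, r.Prime → r ∣ Nat.card G → r ≤ q) →
    ∀ Q : Sylow q G, (Q : Subgroup G).Normal := by
  induction n using Nat.strong_induction_on with
  | _ n ih =>
  intro G _ _ hcard hC q hq hqdvd hqmax Q
  haveI := Fact.mk hq
  have hne1 : Nat.card G ≠ 1 := by
    intro h; rw [h] at hqdvd; exact hq.ne_one (Nat.dvd_one.mp hqdvd)
  set p := (Nat.card G).minFac with hpdef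
  have hp : p.Prime := Nat.minFac_prime hne1
  haveI := Fact.mk hp
  have hpdvd : p ∣ Nat.card G := Nat.minFac_dvd _
  have hmin : ∀ r : ℕ, r.Prime → r ∣ Nat.card G → p ≤ r := fun r hr hrd =>
    Nat.minFac_le_of_dvd hr.two_le hrd
  by_cases hpq : p = q
  · have hidx : (Q : Subgroup G).index = 1 := by
      by_contra hne
      obtain ⟨r, hr, hrd⟩ := Nat.exists_prime_and_dvd hne
      have hrG : r ∣ Nat.card G := hrd.trans (↑Q : Subgroup G).index_dvd_card
      have hre : r = q := le_antisymm (hqmax r hr hrG) (hpq ▸ hmin r hr hrG)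
      exact Q.not_dvd_index (hre ▸ hrd)
    rw [Subgroup.index_eq_one.mp hidx]
    exact inferInstance
  · obtain ⟨P⟩ := (Sylow.nonempty : Nonempty (Sylow p G))
    have hP := my_norm_le_cent P (hC p hp P) hmin
    set N := (MonoidHom.transferSylow P hP).ker with hNdef
    have hcompl : Subgroup.IsComplement' N P := MonoidHom.ker_transferSylow_isComplement' P hP
    have hmul : Nat.card ↥N * Nat.card ↥(P : Subgroup G) = Nat.card G := hcompl.card_mul
    obtain ⟨k, hk⟩ := IsPGroup.iff_card.mp P.2
    have hNne : Nat.card ↥N ≠ 0 := Nat.card_pos.ne'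
    have hPne : Nat.card ↥(P : Subgroup G) ≠ 0 := Nat.card_pos.ne'
    have hqP : ¬ q ∣ Nat.card ↥(P : Subgroup G) := by
      rw [hk]
      intro h
      exact hpq (((Nat.prime_dvd_prime_iff_eq hq hp).mp (hq.dvd_of_dvd_pow h)).symm ▸ rfl)
    have hqN : q ∣ Nat.card ↥N := by
      have h : q ∣ Nat.card ↥N * Nat.card ↥(P : Subgroup G) := hmul ▸ hqdvd
      exact (hq.dvd_mul.mp h).resolve_right hqP
    have hlt : Nat.card ↥N < n := by
      have h2 : 2 ≤ Nat.card ↥(P : Subgroup G) :=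
        le_trans hp.two_le (Nat.le_of_dvd Nat.card_pos (P.dvd_card_of_dvd_card hpdvd))
      have := Nat.card_pos (α := ↥N)
      calc Nat.card ↥N < Nat.card ↥N * Nat.card ↥(P : Subgroup G) := by
            exact lt_mul_of_one_lt_right this h2
        _ = n := by rw [hmul, hcard]
    haveI : IsZGroup G := ⟨hC⟩
    have hCN : ∀ p' : ℕ, p'.Prime → ∀ P' : Sylow p' ↥N, IsCyclic ↥P' :=
      (inferInstance : IsZGroup ↥N).isZGroup
    obtain ⟨R⟩ := (Sylow.nonempty : Nonempty (Sylow q ↥N))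
    have hRnorm : (R : Subgroup ↥N).Normal :=
      ih (Nat.card ↥N) hlt ↥N rfl hCN q hq hqN
        (fun r hr hrd => hqmax r hr (hrd.trans N.card_subgroup_dvd_card)) R
    haveI : (R : Subgroup ↥N).Normal := hRnorm
    haveI : (R : Subgroup ↥N).Characteristic := Sylow.characteristic_of_normal R hRnorm
    set S := (R : Subgroup ↥N).map N.subtype with hSdef
    have hSnorm : S.Normal := my_map_subtype_normal N R
    have hcardS : Nat.card ↥S = q ^ (Nat.card G).factorization q := by
      have h1 : Nat.card ↥S = Nat.card ↥(R : Subgroup ↥N) :=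
        (Nat.card_congr (Subgroup.equivMapOfInjective _ _ N.subtype_injective).toEquiv).symm
      rw [h1, R.card_eq_multiplicity]
      congr 1
      have hfac : (Nat.card G).factorization q
          = (Nat.card ↥N).factorization q + (Nat.card ↥(P : Subgroup G)).factorization q := by
        rw [← hmul, Nat.factorization_mul hNne hPne]
        rfl
      have hzero : (Nat.card ↥(P : Subgroup G)).factorization q = 0 := by
        rw [hk, hp.factorization_pow, Finsupp.single_apply, if_neg hpq]
      rw [hfac, hzero, add_zero]
    have hpg : IsPGroup q ↥S := R.2.map N.subtype
    obtain ⟨T, hST⟩ := hpg.exists_le_sylow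
    have hcardT : Nat.card ↥(T : Subgroup G) = q ^ (Nat.card G).factorization q :=
      T.card_eq_multiplicity
    have hSeqT : S = (T : Subgroup G) := by
      refine le_antisymm hST (Subgroup.subgroupOf_eq_top.mp ?_)
      apply Subgroup.eq_top_of_card_eq
      rw [Nat.card_congr (Subgroup.subgroupOfEquivOfLe hST).toEquiv, hcardS, hcardT]
    have hTnorm : (T : Subgroup G).Normal := hSeqT ▸ hSnorm
    have hu := Sylow.unique_of_normal T hTnorm
    have hQT : Q = T := (hu.uniq Q).trans (hu.uniq T).symm
    rw [hQT]
    exact hTnorm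

/-- Let `G` be a nontrivial finite C-group and `q` the largest prime
dividing `|G|`. Then any Sylow `q`-subgroup `Q` of `G` is normal and has a complement
`H` in `G` (so `G = H ⋉ Q` internally), and `H` is again a C-group. -/
theorem cgroup_split_by_largest_prime {G : Type*} [Group G] [Finite G] [Nontrivial G]
    (hC : ∀ (p : ℕ), p.Prime → ∀ P : Sylow p G, IsCyclic ↥P)
    (q : ℕ) (hq : q.Prime) (hqdvd : q ∣ Nat.card G)
    (hqmax : ∀ r : ℕ, r.Prime → r ∣ Nat.card G → r ≤ q)
    (Q : Sylow q G) :
    (Q : Subgroup G).Normal ∧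
    ∃ H : Subgroup G,
      H ⊓ (Q : Subgroup G) = ⊥ ∧
      (∀ g : G, ∃ h ∈ H, ∃ n ∈ (Q : Subgroup G), g = h * n) ∧
      (∀ (p : ℕ), p.Prime → ∀ P : Sylow p ↥H, IsCyclic ↥P) := by
  haveI := Fact.mk hq
  have hnorm : (Q : Subgroup G).Normal :=
    my_sylow_normal (Nat.card G) G rfl hC q hq hqdvd hqmax Q
  haveI := hnorm
  obtain ⟨H, hH⟩ := Subgroup.exists_left_complement'_of_coprime
    (N := (Q : Subgroup G)) (Q.card_coprime_index)
  refine ⟨hnorm, H, disjoint_iff.mp hH.disjoint, fun g => ?_, fun p hp P => ?_⟩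
  · obtain ⟨⟨h, m⟩, hg, -⟩ := hH.existsUnique g
    exact ⟨h, h.2, m, m.2, hg.symm⟩
  · haveI : IsZGroup G := ⟨hC⟩
    exact (inferInstance : IsZGroup ↥H).isZGroup p hp P
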